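/- Let n ≥ 1 be an integer and let t_{n+1} ∈ (0, n+1) be the unique critical point of t ↦ τ(n+1, t). Then ∂τ/∂t(n, t_{n+1}) = −(1+n)(1+n−t_{n+1}) / (n·t_{n+1}·((2+n)² + (3+n)·t_{n+1} + t_{n+1}²)) < 0; consequently the sequence (t_n) of maximizers is strictly increasing. -/

import Mathlib

noncomputable def tau (x t : ℝ) : ℝ := (1/x) * (t - (t + x + 1) * (t/(1+t)) ^ (x+1))

noncomputable def hfun (m : ℕ) (s : ℝ) : ℝ :=
  s^m * (s^2 + (m+2)*s + (m+1)^2) / (1+s)^(m+2)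

lemma tau_nat (m : ℕ) : (fun s => tau (m:ℝ) s) =
    fun s : ℝ => (1/(m:ℝ)) * (s - (s + m + 1) * (s/(1+s)) ^ (m+1)) := by
  funext s
  unfold tau
  rw [show ((m:ℝ)+1) = ((m+1:ℕ):ℝ) by push_cast; ring, Real.rpow_natCast]

lemma deriv_tau_nat (m : ℕ) (s : ℝ) (hs : 0 < s) :
    deriv (fun s => tau (m:ℝ) s) s = (1/(m:ℝ)) * (1 - hfun m s) := by
  have hs1 : (0:ℝ) < 1 + s := by linarith
  have hs1' : (1:ℝ) + s ≠ 0 := ne_of_gt hs1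
  rw [tau_nat]
  have h1 : HasDerivAt (fun x : ℝ => 1 + x) 1 s := (hasDerivAt_id s).const_add 1
  have hu : HasDerivAt (fun x : ℝ => x/(1+x)) ((1*(1+s) - s*1)/(1+s)^2) s :=
    (hasDerivAt_id s).div h1 hs1'
  have hup : HasDerivAt (fun x : ℝ => (x/(1+x))^(m+1))
      ((m+1) * (s/(1+s))^m * ((1*(1+s) - s*1)/(1+s)^2)) s := by
    simpa using hu.fun_pow (m+1)
  have hl : HasDerivAt (fun x : ℝ => x + (m:ℝ) + 1) 1 s := by
    simpa using ((hasDerivAt_id s).add_const (m:ℝ)).add_const 1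
  have hmul := hl.fun_mul hup
  have htot := ((hasDerivAt_id s).fun_sub hmul).const_mul (1/(m:ℝ))
  simp only [id_eq] at htot
  rw [htot.deriv]
  rw [hfun]
  congr 1
  rw [div_pow, div_pow]
  field_simp
  ring

lemma hasDerivAt_hfun (k : ℕ) (s : ℝ) (hs : (1:ℝ)+s ≠ 0) :
    HasDerivAt (fun x => hfun (k+1) x)
      (((k:ℝ)+1)*((k:ℝ)+2)*(((k:ℝ)+2)-s) * s^k / (1+s)^(k+4)) s := by
  have h1 : HasDerivAt (fun x : ℝ => 1 + x) 1 s := (hasDerivAt_id s).const_add 1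
  have hD : HasDerivAt (fun x : ℝ => (1+x)^(k+3)) (((k:ℝ)+3)*(1+s)^(k+2)) s := by
    have := h1.fun_pow (k+3)
    simpa using this
  have hQ : HasDerivAt (fun x : ℝ => x^2 + (((k:ℝ)+1)+2)*x + (((k:ℝ)+1)+1)^2)
      (2*s + (((k:ℝ)+1)+2)) s := by
    have := ((hasDerivAt_pow 2 s).add (((hasDerivAt_id s).const_mul (((k:ℝ)+1)+2)))).add_const
      ((((k:ℝ)+1)+1)^2)
    simpa [mul_comm] using this
  have hP : HasDerivAt (fun x : ℝ => x^(k+1)) (((k:ℝ)+1)*s^k) s := by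
    simpa using hasDerivAt_pow (k+1) s
  have hN := hP.fun_mul hQ
  have hDne : ((1:ℝ)+s)^(k+3) ≠ 0 := pow_ne_zero _ hs
  have hdiv := hN.fun_div hD hDne
  have heq : (fun x : ℝ => x^(k+1) * (x^2 + (((k:ℝ)+1)+2)*x + (((k:ℝ)+1)+1)^2) / (1+x)^(k+3))
      = fun x => hfun (k+1) x := by
    funext x
    simp only [hfun]
    push_cast
    ring_nf
  rw [heq] at hdiv
  refine hdiv.congr_deriv ?_
  rw [div_eq_div_iff (pow_ne_zero _ hDne) (pow_ne_zero _ hs)]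
  ring

lemma hfun_strictMonoOn (k : ℕ) :
    StrictMonoOn (hfun (k+1)) (Set.Icc 0 (((k:ℝ)+1)+1)) := by
  apply strictMonoOn_of_deriv_pos (convex_Icc _ _)
  · apply ContinuousOn.div (by fun_prop) (by fun_prop)
    intro x hx
    exact pow_ne_zero _ (by have := hx.1; intro h; nlinarith)
  · intro x hx
    rw [interior_Icc] at hx
    have hx1 : (1:ℝ) + x ≠ 0 := by have := hx.1; intro h; nlinarith
    rw [(hasDerivAt_hfun k x hx1).deriv]
    have h2 : (0:ℝ) < (k:ℝ)+2 - x := by have := hx.2; linarith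
    apply div_pos
    · exact mul_pos (mul_pos (by positivity) h2) (pow_pos hx.1 k)
    · apply pow_pos; nlinarith [hx.1]

theorem stmt15 : ∀ n : ℕ, 1 ≤ n → ∀ t : ℝ, t ∈ Set.Ioo 0 ((n:ℝ)+1) →
    deriv (fun s => tau ((n:ℝ)+1) s) t = 0 →
    (deriv (fun s => tau (n:ℝ) s) t =
        -((1+(n:ℝ))*(1+(n:ℝ)-t)) / ((n:ℝ)*t*((2+(n:ℝ))^2 + (3+(n:ℝ))*t + t^2)) ∧
      deriv (fun s => tau (n:ℝ) s) t < 0) ∧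
    ∀ tn : ℝ, tn ∈ Set.Ioo 0 (n:ℝ) → deriv (fun s => tau (n:ℝ) s) tn = 0 → tn < t := by
  intro n hn1 t ht hcrit
  obtain ⟨ht0, htlt⟩ := ht
  have hnR : (0:ℝ) < (n:ℝ) := by exact_mod_cast hn1
  have hnne : (n:ℝ) ≠ 0 := ne_of_gt hnR
  have ht1 : (0:ℝ) < 1 + t := by linarith
  have ht1' : (1:ℝ) + t ≠ 0 := ne_of_gt ht1
  -- critical point equation
  have hcast : (fun s => tau ((n:ℝ)+1) s) = (fun s => tau (((n+1:ℕ)):ℝ) s) := by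
    norm_num
  rw [hcast] at hcrit
  rw [deriv_tau_nat (n+1) t ht0] at hcrit
  have hcrit1 : hfun (n+1) t = 1 := by
    have hne : (1:ℝ)/((n+1:ℕ):ℝ) ≠ 0 := by positivity
    have := (mul_eq_zero.mp hcrit).resolve_left hne
    linarith
  -- the polynomial relation
  have E : t^(n+1) * (t^2 + ((n:ℝ)+3)*t + ((n:ℝ)+2)^2) = (1+t)^(n+3) := by
    rw [hfun] at hcrit1
    rw [div_eq_one_iff_eq (pow_ne_zero _ ht1')] at hcrit1
    rw [show n+1+2 = n+3 from rfl] at hcrit1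
    push_cast at hcrit1 ⊢
    linarith [hcrit1]
  -- rewrite E in terms of a := t^n, b := (1+t)^(n+2)
  set a : ℝ := t^n with ha
  set b : ℝ := (1+t)^(n+2) with hb
  have hane : a ≠ 0 := pow_ne_zero _ (ne_of_gt ht0)
  have E' : t * a * (t^2 + ((n:ℝ)+3)*t + ((n:ℝ)+2)^2) = (1+t) * b := by
    have h1 : t^(n+1) = t * a := by rw [ha, pow_succ]; ring
    have h2 : (1+t)^(n+3) = (1+t) * b := by rw [hb, show n+3 = (n+2)+1 from rfl, pow_succ]; ring
    rw [h1, h2] at E; exact E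
  have hbeq : b = t * a * (t^2 + ((n:ℝ)+3)*t + ((n:ℝ)+2)^2) / (1+t) := by
    field_simp [E']
    linear_combination -E'
  -- derivative at x = n
  have hder : deriv (fun s => tau (n:ℝ) s) t = (1/(n:ℝ)) * (1 - hfun n t) :=
    deriv_tau_nat n t ht0
  have hQpos : (0:ℝ) < (2+(n:ℝ))^2 + (3+(n:ℝ))*t + t^2 := by positivity
  have hmain : deriv (fun s => tau (n:ℝ) s) t =
      -((1+(n:ℝ))*(1+(n:ℝ)-t)) / ((n:ℝ)*t*((2+(n:ℝ))^2 + (3+(n:ℝ))*t + t^2)) := by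
    rw [hder, hfun]
    have hfa : (t:ℝ)^n = a := rfl
    have hfb : ((1:ℝ)+t)^(n+2) = b := rfl
    rw [hfa, hfb, hbeq]
    field_simp
    ring
  have hneg : deriv (fun s => tau (n:ℝ) s) t < 0 := by
    rw [hmain]
    apply div_neg_of_neg_of_pos
    · have : (0:ℝ) < (1+(n:ℝ))*(1+(n:ℝ)-t) := by
        apply mul_pos (by linarith)
        linarith
      linarith
    · exact mul_pos (mul_pos hnR ht0) hQpos
  refine ⟨⟨hmain, hneg⟩, ?_⟩
  -- monotonicity part
  intro tn htn hderzero
  obtain ⟨htn0, htnlt⟩ := htn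
  have htn1 : hfun n tn = 1 := by
    rw [deriv_tau_nat n tn htn0] at hderzero
    have hne : (1:ℝ)/(n:ℝ) ≠ 0 := by positivity
    have := (mul_eq_zero.mp hderzero).resolve_left hne
    linarith
  have htgt : 1 < hfun n t := by
    rw [hder] at hneg
    have hp : (0:ℝ) < 1/(n:ℝ) := by positivity
    nlinarith [hneg, hp]
  obtain ⟨k, rfl⟩ : ∃ k, n = k+1 := ⟨n-1, (Nat.succ_pred_eq_of_pos hn1).symm⟩
  have hsm := hfun_strictMonoOn k
  have hcst : ((k+1:ℕ):ℝ) = (k:ℝ)+1 := by push_cast; ring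
  have htmem : t ∈ Set.Icc 0 (((k:ℝ)+1)+1) := by
    constructor
    · linarith
    · rw [hcst] at htlt; linarith
  have htnmem : tn ∈ Set.Icc 0 (((k:ℝ)+1)+1) := by
    constructor
    · linarith
    · rw [hcst] at htnlt; linarith
  by_contra hcon
  push_neg at hcon
  rcases lt_or_eq_of_le hcon with hlt | heq
  · have := hsm htmem htnmem hlt
    rw [htn1] at this
    linarith
  · rw [heq] at htgt
    rw [htn1] at htgt
    linarith
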